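/- Commutation of infinite-volume addition operators on normal configurations: let η ∈ {1,2,3}^S and x, y ∈ S, and suppose that η, a_yη and a_xη are all normal configurations. Then a_x(a_yη) = a_y(a_xη). -/

import Mathlib

open Finset

/-- `S` is the vertex set of the rootless binary tree: a connected acyclic simple
graph in which every vertex has exactly 3 neighbours. -/
def IsBinaryTree {S : Type*} (G : SimpleGraph S) : Prop :=
  G.Connected ∧ G.IsAcyclic ∧ ∀ v : S, {w : S | G.Adj v w}.ncard = 3

variable {S : Type*} [DecidableEq S]

/-- Toppling at site `x` inside the finite volume `V`: `x` loses 3 grains and each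
neighbour of `x` lying in `V` receives one grain (grains sent outside `V` are lost). -/
def toppleAt (G : SimpleGraph S) [DecidableRel G.Adj] (V : Finset S)
    (η : S → ℕ) (x : S) : S → ℕ :=
  fun y => if y = x then η x - 3 else if y ∈ V ∧ G.Adj x y then η y + 1 else η y

/-- Applying a finite sequence of topplings (given as a list of sites). -/
def applySeq (G : SimpleGraph S) [DecidableRel G.Adj] (V : Finset S) :
    (S → ℕ) → List S → (S → ℕ)
  | η, [] => η
  | η, x :: L => applySeq G V (toppleAt G V η x) L

/-- A list of sites is a legal toppling sequence from `η`: each toppled site lies in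
`V` and has height `> 3` at the moment it is toppled. -/
def LegalSeq (G : SimpleGraph S) [DecidableRel G.Adj] (V : Finset S) :
    (S → ℕ) → List S → Prop
  | _, [] => True
  | η, x :: L => x ∈ V ∧ 3 < η x ∧ LegalSeq G V (toppleAt G V η x) L

/-- `η` is stable on `V`: all heights in `V` are at most 3. -/
def Stable (V : Finset S) (η : S → ℕ) : Prop := ∀ x ∈ V, η x ≤ 3

/-- `η` is a stable configuration on `V`: heights in `V` lie in `{1,2,3}`. -/
def StableConfig (V : Finset S) (η : S → ℕ) : Prop := ∀ x ∈ V, 1 ≤ η x ∧ η x ≤ 3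

/-- `ζ` is a stabilization of `η` in `V`: it is reached from `η` by a finite legal
sequence of topplings and is stable. -/
def Stabilizes (G : SimpleGraph S) [DecidableRel G.Adj] (V : Finset S)
    (η ζ : S → ℕ) : Prop :=
  ∃ L : List S, LegalSeq G V η L ∧ applySeq G V η L = ζ ∧ Stable V ζ

open scoped Classical in
/-- The stabilization map `𝒯` (well defined since stabilization exists and is
unique, by the abelian property). -/
noncomputable def stabilize (G : SimpleGraph S) [DecidableRel G.Adj] (V : Finset S)
    (η : S → ℕ) : S → ℕ :=
  if h : ∃ ζ, Stabilizes G V η ζ then h.choose else η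

/-- Adding one grain at `x`. -/
def addGrain (x : S) (η : S → ℕ) : S → ℕ := Function.update η x (η x + 1)

/-- The addition operator `a_{x,V}`: add one grain at `x` and stabilize in `V`. -/
noncomputable def addOp (G : SimpleGraph S) [DecidableRel G.Adj] (V : Finset S)
    (x : S) (η : S → ℕ) : S → ℕ :=
  stabilize G V (addGrain x η)

/-- `η` contains a forbidden subconfiguration in `V`: there is a nonempty `W ⊆ V`
such that every `x ∈ W` has height at most the number of its neighbours in `W`. -/
def HasFSC (G : SimpleGraph S) [DecidableRel G.Adj] (V : Finset S)
    (η : S → ℕ) : Prop :=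
  ∃ W : Finset S, W ⊆ V ∧ W.Nonempty ∧
    ∀ x ∈ W, η x ≤ (W.filter (fun y => y ≠ x ∧ G.Adj x y)).card

/-- `η` is an allowed stable configuration on `V`. -/
def Allowed (G : SimpleGraph S) [DecidableRel G.Adj] (V : Finset S)
    (η : S → ℕ) : Prop :=
  StableConfig V η ∧ ¬ HasFSC G V η

/-- `η` is an allowed stable configuration on `V`, padded with height 1 outside `V`
(a canonical representative, used for counting and summing over `𝒜_V`). -/
def AllowedExt (G : SimpleGraph S) [DecidableRel G.Adj] (V : Finset S)
    (η : S → ℕ) : Prop :=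
  Allowed G V η ∧ ∀ x ∉ V, η x = 1

/-- The expectation of `f` under the uniform measure on the (finite) set `A`. -/
noncomputable def expectOn (A : Set (S → ℕ)) (f : (S → ℕ) → ℝ) : ℝ :=
  (∑ᶠ η ∈ A, f η) / (A.ncard : ℝ)

/-- `η` is a normal configuration: adding a grain at any `x` only affects a finite
region, i.e. `a_{x,V}η` is eventually independent of the volume `V`. -/
def NormalCfg (G : SimpleGraph S) [DecidableRel G.Adj] (η : S → ℕ) : Prop :=
  ∀ x : S, ∃ Vx : Finset S, x ∈ Vx ∧
    ∀ V V' : Finset S, Vx ⊆ V → V ⊆ V' → addOp G V' x η = addOp G V x η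

open scoped Classical in
/-- The infinite-volume addition operator `a_x`, defined on normal configurations
as the common value of `a_{x,V}` for all large volumes `V`. -/
noncomputable def addInf (G : SimpleGraph S) [DecidableRel G.Adj]
    (x : S) (η : S → ℕ) : S → ℕ :=
  if h : ∃ Vx : Finset S, x ∈ Vx ∧
      ∀ V V' : Finset S, Vx ⊆ V → V ⊆ V' → addOp G V' x η = addOp G V x η
  then addOp G h.choose x η else η

/-! ### Auxiliary development: the abelian sandpile property -/

section Aux

variable {G : SimpleGraph S} [DecidableRel G.Adj] {V : Finset S}

lemma legalSeq_cons {η : S → ℕ} {x : S} {L : List S} :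
    LegalSeq G V η (x :: L) ↔
      x ∈ V ∧ 3 < η x ∧ LegalSeq G V (toppleAt G V η x) L := Iff.rfl

lemma applySeq_cons (η : S → ℕ) (x : S) (L : List S) :
    applySeq G V η (x :: L) = applySeq G V (toppleAt G V η x) L := rfl

lemma applySeq_formula {η : S → ℕ} {L : List S} (hL : LegalSeq G V η L) (z : S) :
    applySeq G V η L z + 3 * L.count z
      = η z + (if z ∈ V then L.countP (fun w => decide (G.Adj w z)) else 0) := by
  induction L generalizing η with
  | nil => simp [applySeq]
  | cons w L ih =>
    obtain ⟨hwV, hw3, hL⟩ := hL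
    have ih' := ih hL
    simp only [applySeq_cons, List.count_cons, List.countP_cons]
    by_cases hzw : z = w
    · subst hzw
      have h1 : toppleAt G V η z z = η z - 3 := by simp [toppleAt]
      rw [h1, if_pos hwV] at ih'
      have hc : ((z == z) = true) := by simp
      rw [if_pos hc, if_pos hwV]
      have hd : ¬(decide (G.Adj z z) = true) := by simp
      rw [if_neg hd]
      omega
    · have hc : ¬((w == z) = true) := by simpa using Ne.symm hzw
      rw [if_neg hc]
      by_cases hzV : z ∈ V
      · rw [if_pos hzV]
        by_cases hadj : G.Adj w z
        · have h1 : toppleAt G V η w z = η z + 1 := by simp [toppleAt, hzw, hzV, hadj]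
          rw [h1, if_pos hzV] at ih'
          have hd : (decide (G.Adj w z) = true) := by simp [hadj]
          rw [if_pos hd]
          omega
        · have h1 : toppleAt G V η w z = η z := by simp [toppleAt, hzw, hadj]
          rw [h1, if_pos hzV] at ih'
          have hd : ¬(decide (G.Adj w z) = true) := by simp [hadj]
          rw [if_neg hd]
          omega
      · rw [if_neg hzV]
        have h1 : toppleAt G V η w z = η z := by simp [toppleAt, hzw, hzV]
        rw [h1, if_neg hzV] at ih'
        omega

lemma legal_mem {η : S → ℕ} {L : List S} (hL : LegalSeq G V η L) :
    ∀ z ∈ L, z ∈ V := by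
  induction L generalizing η with
  | nil => simp
  | cons w L ih =>
    obtain ⟨hwV, _, hL⟩ := hL
    intro z hz
    rcases List.mem_cons.1 hz with h | h
    · exact h ▸ hwV
    · exact ih hL z h

lemma applySeq_append (η : S → ℕ) (L M : List S) :
    applySeq G V η (L ++ M) = applySeq G V (applySeq G V η L) M := by
  induction L generalizing η with
  | nil => rfl
  | cons w L ih => simpa [applySeq_cons] using ih (toppleAt G V η w)

lemma legalSeq_append {η : S → ℕ} {L M : List S} (hL : LegalSeq G V η L)
    (hM : LegalSeq G V (applySeq G V η L) M) : LegalSeq G V η (L ++ M) := by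
  induction L generalizing η with
  | nil => exact hM
  | cons w L ih =>
    obtain ⟨h1, h2, h3⟩ := hL
    exact ⟨h1, h2, ih h3 hM⟩

lemma toppleAt_comm {η : S → ℕ} {x y : S} (hxy : x ≠ y) (hx : 3 ≤ η x) (hy : 3 ≤ η y) :
    toppleAt G V (toppleAt G V η x) y = toppleAt G V (toppleAt G V η y) x := by
  funext z
  by_cases hzx : z = x
  · subst hzx
    simp only [toppleAt, if_neg hxy, if_neg (Ne.symm hxy), if_pos rfl]
    first
        | omega
        | (split_ifs <;> omega)
  · by_cases hzy : z = y
    · subst hzy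
      simp only [toppleAt, if_neg (Ne.symm hxy), if_neg hxy, if_pos rfl]
      first
        | omega
        | (split_ifs <;> omega)
    · simp only [toppleAt, if_neg hzx, if_neg hzy]
      first
        | omega
        | (split_ifs <;> omega)

lemma legal_cons_erase {η : S → ℕ} {L : List S} (hL : LegalSeq G V η L) {x : S}
    (hxL : x ∈ L) (hx3 : 3 < η x) : LegalSeq G V η (x :: L.erase x) := by
  induction L generalizing η with
  | nil => simp at hxL
  | cons y L ih =>
    obtain ⟨hyV, hy3, hL⟩ := hL
    by_cases hxy : x = y
    · subst hxy
      rw [List.erase_cons_head]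
      exact ⟨hyV, hx3, hL⟩
    · have hxL' : x ∈ L := by
        rcases List.mem_cons.1 hxL with h | h
        · exact absurd h hxy
        · exact h
      have hx3' : 3 < toppleAt G V η y x := by
        simp only [toppleAt, if_neg hxy]
        first
        | omega
        | (split_ifs <;> omega)
      obtain ⟨hxV, _, htail⟩ := ih hL hxL' hx3'
      have herase : (y :: L).erase x = y :: L.erase x := by
        rw [List.erase_cons_tail]
        simp [Ne.symm hxy]
      rw [herase]
      refine ⟨hxV, hx3, hyV, ?_, ?_⟩
      · show 3 < toppleAt G V η x y
        simp only [toppleAt, if_neg (Ne.symm hxy)]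
        first
        | omega
        | (split_ifs <;> omega)
      · show LegalSeq G V (toppleAt G V (toppleAt G V η x) y) (L.erase x)
        rw [toppleAt_comm hxy (by omega) (by omega)]
        exact htail

lemma applySeq_perm {η : S → ℕ} {L M : List S} (hL : LegalSeq G V η L)
    (hM : LegalSeq G V η M) (h : L.Perm M) :
    applySeq G V η L = applySeq G V η M := by
  funext z
  have h1 := applySeq_formula hL z
  have h2 := applySeq_formula hM z
  rw [h.count_eq, h.countP_eq] at h1
  omega

lemma count_le_of_stable {η : S → ℕ} {L M : List S} (hL : LegalSeq G V η L)
    (hSt : Stable V (applySeq G V η L)) (hM : LegalSeq G V η M) :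
    ∀ z, M.count z ≤ L.count z := by
  induction M generalizing η L with
  | nil => simp
  | cons x M ih =>
    obtain ⟨hxV, hx3, hM⟩ := hM
    have hxL : x ∈ L := by
      by_contra hxL
      have h0 : L.count x = 0 := List.count_eq_zero.2 hxL
      have h1 := applySeq_formula hL x
      rw [h0, if_pos hxV] at h1
      have := hSt x hxV
      omega
    have hls := legal_cons_erase hL hxL hx3
    have hperm : L.Perm (x :: L.erase x) := List.perm_cons_erase hxL
    have happ : applySeq G V η L = applySeq G V η (x :: L.erase x) :=
      applySeq_perm hL hls hperm
    have hSt' : Stable V (applySeq G V (toppleAt G V η x) (L.erase x)) := by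
      rw [← applySeq_cons, ← happ]; exact hSt
    have hcount := ih hls.2.2 hSt' hM
    intro z
    have h1 := hcount z
    have hcz := hperm.count_eq z
    rw [List.count_cons] at hcz ⊢
    by_cases hzx : z = x
    · subst hzx
      simp only [beq_self_eq_true, if_true] at hcz ⊢
      omega
    · simp only [beq_iff_eq, if_neg (Ne.symm hzx)] at hcz ⊢
      omega

lemma stabilizes_unique {η ζ ξ : S → ℕ} (h1 : Stabilizes G V η ζ)
    (h2 : Stabilizes G V η ξ) : ζ = ξ := by
  obtain ⟨L, hL, hLe, hLs⟩ := h1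
  obtain ⟨M, hM, hMe, hMs⟩ := h2
  have hcnt : ∀ z, L.count z = M.count z := fun z =>
    le_antisymm (count_le_of_stable hM (hMe ▸ hMs) hL z)
      (count_le_of_stable hL (hLe ▸ hLs) hM z)
  have hperm : L.Perm M := List.perm_iff_count.2 hcnt
  rw [← hLe, ← hMe, applySeq_perm hL hM hperm]

lemma stabilize_eq {η ζ : S → ℕ} (h : Stabilizes G V η ζ) : stabilize G V η = ζ := by
  have hex : ∃ ζ, Stabilizes G V η ζ := ⟨ζ, h⟩
  unfold stabilize
  rw [dif_pos hex]
  exact stabilizes_unique hex.choose_spec h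

lemma toppleAt_addGrain {η : S → ℕ} {x w : S} (hw : 3 ≤ η w) :
    toppleAt G V (addGrain x η) w = addGrain x (toppleAt G V η w) := by
  funext z
  simp only [toppleAt, addGrain, Function.update_apply]
  by_cases hzw : z = w <;> by_cases hzx : z = x <;> by_cases hwx : w = x <;>
    simp only [hzw, hzx, hwx, if_true, if_false] <;> first
      | omega
      | (first
        | omega
        | (split_ifs <;> omega))
      | (simp_all <;> first
        | omega
        | (split_ifs <;> omega))

lemma legal_addGrain {η : S → ℕ} {L : List S} (x : S) (hL : LegalSeq G V η L) :
    LegalSeq G V (addGrain x η) L ∧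
      applySeq G V (addGrain x η) L = addGrain x (applySeq G V η L) := by
  induction L generalizing η with
  | nil => exact ⟨trivial, rfl⟩
  | cons w L ih =>
    obtain ⟨hwV, hw3, hL⟩ := hL
    have hg : 3 < addGrain x η w := by
      unfold addGrain
      by_cases hwx : w = x
      · subst hwx
        simp only [Function.update_self]
        omega
      · rw [Function.update_apply, if_neg hwx]
        omega
    obtain ⟨ih1, ih2⟩ := ih hL
    constructor
    · rw [legalSeq_cons, toppleAt_addGrain (le_of_lt hw3)]
      exact ⟨hwV, hg, ih1⟩
    · rw [applySeq_cons, toppleAt_addGrain (le_of_lt hw3), ih2, applySeq_cons]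

lemma stabilizes_addGrain {η ζ ξ : S → ℕ} {x : S} (h1 : Stabilizes G V η ζ)
    (h2 : Stabilizes G V (addGrain x ζ) ξ) : Stabilizes G V (addGrain x η) ξ := by
  obtain ⟨L, hL, hLe, _⟩ := h1
  obtain ⟨M, hM, hMe, hMs⟩ := h2
  obtain ⟨hL', hLe'⟩ := legal_addGrain x hL
  refine ⟨L ++ M, ?_, ?_, hMs⟩
  · apply legalSeq_append hL'
    rw [hLe', hLe]; exact hM
  · rw [applySeq_append, hLe', hLe, hMe]

/-! #### Existence of stabilization -/

lemma exists_outside (hG : IsBinaryTree G) (V : Finset S) : ∃ u : S, u ∉ V := by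
  by_contra h
  push_neg at h
  haveI : Finite S :=
    Finite.of_injective (fun s : S => (⟨s, h s⟩ : {z // z ∈ V}))
      (fun a b hab => congrArg Subtype.val hab)
  haveI : Fintype S := Fintype.ofFinite S
  have htree : G.IsTree := ⟨hG.1, hG.2.1⟩
  have hcard := htree.card_edgeFinset
  have hdeg : ∀ v : S, G.degree v = 3 := by
    intro v
    have h3 : (G.neighborSet v).ncard = 3 := hG.2.2 v
    rw [Set.ncard_eq_toFinset_card'] at h3
    rw [← h3, SimpleGraph.degree, SimpleGraph.neighborFinset_def]
  have hsum := G.sum_degrees_eq_twice_card_edges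
  simp only [hdeg, Finset.sum_const, smul_eq_mul] at hsum
  have hpos : 0 < Fintype.card S := by
    have : Nonempty S := hG.1.nonempty
    exact Fintype.card_pos
  rw [Finset.card_univ] at hsum
  omega

/-- `Escape G V n z`: from `z` one can leave `V` in at most `n` steps. -/
def Escape (G : SimpleGraph S) (V : Finset S) : ℕ → S → Prop
  | 0, z => z ∉ V
  | n + 1, z => z ∉ V ∨ ∃ y, G.Adj z y ∧ Escape G V n y

lemma escape_mono : ∀ {m n : ℕ}, m ≤ n → ∀ {z : S}, Escape G V m z → Escape G V n z := by
  have hsucc : ∀ n (z : S), Escape G V n z → Escape G V (n + 1) z := by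
    intro n
    induction n with
    | zero => intro z hz; exact Or.inl hz
    | succ n ih =>
      rintro z (hz | ⟨y, hy, he⟩)
      · exact Or.inl hz
      · exact Or.inr ⟨y, hy, ih y he⟩
  intro m n hmn
  induction hmn with
  | refl => exact fun hz => hz
  | step _ ih => exact fun hz => hsucc _ _ (ih hz)

lemma escape_exists (hG : IsBinaryTree G) (V : Finset S) (z : S) :
    ∃ n, Escape G V n z := by
  obtain ⟨u, hu⟩ := exists_outside hG V
  obtain ⟨w⟩ := hG.1.preconnected z u
  induction w with
  | nil => exact ⟨0, hu⟩
  | cons h p ih =>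
    obtain ⟨n, hn⟩ := ih hu
    exact ⟨n + 1, Or.inr ⟨_, h, hn⟩⟩

lemma card_filter_adj_le (hG : IsBinaryTree G) (w : S) (W : Finset S)
    (hW : ∀ z ∈ W, G.Adj w z) : W.card ≤ 3 := by
  have hfin : {z : S | G.Adj w z}.Finite :=
    Set.finite_of_ncard_ne_zero (by rw [hG.2.2 w]; omega)
  have hsub : (W : Set S) ⊆ {z : S | G.Adj w z} := fun z hz => hW z (by simpa using hz)
  calc W.card = (W : Set S).ncard := (Set.ncard_coe_finset W).symm
    _ ≤ {z : S | G.Adj w z}.ncard := Set.ncard_le_ncard hsub hfin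
    _ = 3 := hG.2.2 w

lemma card_filter_adj_le_two (hG : IsBinaryTree G) (w : S) (W : Finset S)
    (hW : ∀ z ∈ W, G.Adj w z) {y : S} (hy : G.Adj w y) (hyW : y ∉ W) :
    W.card ≤ 2 := by
  have hfin : {z : S | G.Adj w z}.Finite :=
    Set.finite_of_ncard_ne_zero (by rw [hG.2.2 w]; omega)
  have hsub : (W : Set S) ⊆ {z : S | G.Adj w z} \ {y} := by
    intro z hz
    refine ⟨hW z (by simpa using hz), ?_⟩
    simp only [Set.mem_singleton_iff]
    rintro rfl
    exact hyW (by simpa using hz)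
  calc W.card = (W : Set S).ncard := (Set.ncard_coe_finset W).symm
    _ ≤ ({z : S | G.Adj w z} \ {y}).ncard := Set.ncard_le_ncard hsub hfin.diff
    _ = {z : S | G.Adj w z}.ncard - 1 := Set.ncard_diff_singleton_of_mem hy
    _ ≤ 2 := by rw [hG.2.2 w]

lemma mass_toppleAt (η : S → ℕ) {w : S} (hwV : w ∈ V) (hw : 3 ≤ η w) :
    ∑ z ∈ V, toppleAt G V η w z + 3
      = ∑ z ∈ V, η z + ((V.erase w).filter (fun z => G.Adj w z)).card := by
  have hsum : ∀ f : S → ℕ, ∑ z ∈ V, f z = f w + ∑ z ∈ V.erase w, f z :=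
    fun f => (Finset.add_sum_erase V f hwV).symm
  rw [hsum (toppleAt G V η w), hsum η]
  have hw' : toppleAt G V η w w = η w - 3 := by simp [toppleAt]
  have hrest : ∑ z ∈ V.erase w, toppleAt G V η w z
      = ∑ z ∈ V.erase w, (η z + if G.Adj w z then 1 else 0) := by
    refine Finset.sum_congr rfl fun z hz => ?_
    have hz1 : z ≠ w := Finset.ne_of_mem_erase hz
    have hz2 : z ∈ V := Finset.mem_of_mem_erase hz
    simp only [toppleAt, if_neg hz1, hz2, true_and]
    first
        | omega
        | (split_ifs <;> omega)
  rw [hw', hrest, Finset.sum_add_distrib, Finset.sum_boole]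
  push_cast
  omega

lemma mass_toppleAt_le (hG : IsBinaryTree G) (η : S → ℕ) {w : S}
    (hwV : w ∈ V) (hw : 3 ≤ η w) :
    ∑ z ∈ V, toppleAt G V η w z ≤ ∑ z ∈ V, η z := by
  have h1 := mass_toppleAt (V := V) (G := G) η hwV hw
  have h2 : ((V.erase w).filter (fun z => G.Adj w z)).card ≤ 3 :=
    card_filter_adj_le hG w _ (by intro z hz; exact (Finset.mem_filter.1 hz).2)
  omega

lemma mass_toppleAt_lt (hG : IsBinaryTree G) (η : S → ℕ) {w : S}
    (hwV : w ∈ V) (hw : 3 ≤ η w) {y : S} (hy : G.Adj w y) (hyV : y ∉ V) :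
    ∑ z ∈ V, toppleAt G V η w z + 1 ≤ ∑ z ∈ V, η z := by
  have h1 := mass_toppleAt (V := V) (G := G) η hwV hw
  have h2 : ((V.erase w).filter (fun z => G.Adj w z)).card ≤ 2 := by
    refine card_filter_adj_le_two hG w _ (fun z hz => (Finset.mem_filter.1 hz).2) hy ?_
    intro hmem
    exact hyV (Finset.mem_of_mem_erase (Finset.mem_filter.1 hmem).1)
  omega

lemma mass_applySeq_le (hG : IsBinaryTree G) {η : S → ℕ} {L : List S}
    (hL : LegalSeq G V η L) :
    ∑ z ∈ V, applySeq G V η L z ≤ ∑ z ∈ V, η z := by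
  induction L generalizing η with
  | nil => exact le_rfl
  | cons w L ih =>
    obtain ⟨hwV, hw3, hL⟩ := hL
    exact le_trans (ih hL) (mass_toppleAt_le hG η hwV (le_of_lt hw3))

lemma count_boundary_le (hG : IsBinaryTree G) {η : S → ℕ} {L : List S}
    (hL : LegalSeq G V η L) {x y : S} (hxy : G.Adj x y) (hyV : y ∉ V) :
    ∑ z ∈ V, applySeq G V η L z + L.count x ≤ ∑ z ∈ V, η z := by
  induction L generalizing η with
  | nil => simp [applySeq]
  | cons w L ih =>
    obtain ⟨hwV, hw3, hL⟩ := hL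
    have h1 := ih hL
    rw [applySeq_cons, List.count_cons]
    by_cases hxw : x = w
    · subst hxw
      have h2 := mass_toppleAt_lt hG (V := V) η hwV (le_of_lt hw3) hxy hyV
      simp only [beq_self_eq_true, if_true]
      omega
    · have h2 := mass_toppleAt_le hG (V := V) η hwV (le_of_lt hw3)
      simp only [beq_iff_eq, if_neg (Ne.symm hxw)]
      omega

/-- The geometric bound used in the toppling-count estimate. -/
def bnd (M : ℕ) : ℕ → ℕ
  | 0 => 0
  | n + 1 => M + 3 * bnd M n

lemma count_le_escape (hG : IsBinaryTree G) {η : S → ℕ} {L : List S}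
    (hL : LegalSeq G V η L) :
    ∀ n (z : S), Escape G V n z → z ∈ V → L.count z ≤ bnd (∑ z ∈ V, η z) n := by
  intro n
  induction n with
  | zero => intro z hz hzV; exact absurd hzV hz
  | succ n ih =>
    rintro z (hz | ⟨y, hzy, hy⟩) hzV
    · exact absurd hzV hz
    · by_cases hyV : y ∈ V
      · -- chain through y
        have hform := applySeq_formula hL y
        rw [if_pos hyV] at hform
        have hcle : L.count z ≤ L.countP (fun w => decide (G.Adj w y)) := by
          unfold List.count
          refine List.countP_mono_left fun b _ hb => ?_
          have : b = z := by simpa using hb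
          simpa [this] using hzy
        have hfin : applySeq G V η L y ≤ ∑ z ∈ V, applySeq G V η L z :=
          Finset.single_le_sum (fun i _ => Nat.zero_le _) hyV
        have hmass := mass_applySeq_le hG hL
        have hihy := ih y hy hyV
        simp only [bnd]
        omega
      ·
        have hb := count_boundary_le hG hL hzy hyV
        simp only [bnd]
        omega

lemma legal_length_le (hG : IsBinaryTree G) (V : Finset S) (η : S → ℕ) :
    ∃ N, ∀ L : List S, LegalSeq G V η L → L.length ≤ N := by
  have hescN : ∃ N, ∀ z ∈ V, Escape G V N z := by
    suffices h : ∀ W : Finset S, ∃ N, ∀ z ∈ W, Escape G V N z from h V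
    intro W
    induction W using Finset.induction with
    | empty => exact ⟨0, by simp⟩
    | @insert a W ha ih =>
      obtain ⟨N, hN⟩ := ih
      obtain ⟨n, hn⟩ := escape_exists hG V a
      refine ⟨max n N, fun z hz => ?_⟩
      rcases Finset.mem_insert.1 hz with rfl | hz
      · exact escape_mono (le_max_left _ _) hn
      · exact escape_mono (le_max_right _ _) (hN z hz)
  obtain ⟨N, hN⟩ := hescN
  refine ⟨V.card * bnd (∑ z ∈ V, η z) N, fun L hL => ?_⟩
  have hmem : ∀ z ∈ L, z ∈ V := legal_mem hL
  have h1 : L.length = ∑ z ∈ L.toFinset, L.count z := (List.sum_toFinset_count_eq_length L).symm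
  have h2 : ∑ z ∈ L.toFinset, L.count z ≤ ∑ z ∈ V, L.count z := by
    refine Finset.sum_le_sum_of_subset ?_
    intro z hz
    exact hmem z (List.mem_toFinset.1 hz)
  have h3 : ∑ z ∈ V, L.count z ≤ V.card * bnd (∑ z ∈ V, η z) N := by
    calc ∑ z ∈ V, L.count z ≤ ∑ _z ∈ V, bnd (∑ z ∈ V, η z) N :=
          Finset.sum_le_sum fun z hz => count_le_escape hG hL N z (hN z hz) hz
      _ = V.card * bnd (∑ z ∈ V, η z) N := by rw [Finset.sum_const, smul_eq_mul]
  omega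

lemma exists_stabilizes (hG : IsBinaryTree G) (V : Finset S) (η : S → ℕ) :
    ∃ ζ, Stabilizes G V η ζ := by
  suffices aux : ∀ N (η : S → ℕ), (∀ L : List S, LegalSeq G V η L → L.length ≤ N) →
      ∃ ζ, Stabilizes G V η ζ by
    obtain ⟨N, hN⟩ := legal_length_le hG V η
    exact aux N η hN
  intro N
  induction N with
  | zero =>
    intro η hN
    refine ⟨η, [], trivial, rfl, ?_⟩
    by_contra hst
    simp only [Stable] at hst
    push_neg at hst
    obtain ⟨x, hxV, hx3⟩ := hst
    have := hN [x] ⟨hxV, by omega, trivial⟩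
    simp at this
  | succ N ih =>
    intro η hN
    by_cases hst : Stable V η
    · exact ⟨η, [], trivial, rfl, hst⟩
    · simp only [Stable] at hst
      push_neg at hst
      obtain ⟨x, hxV, hx3⟩ := hst
      have hx3' : 3 < η x := hx3
      have h' : ∀ L, LegalSeq G V (toppleAt G V η x) L → L.length ≤ N := by
        intro L hL
        have := hN (x :: L) ⟨hxV, hx3', hL⟩
        simpa using this
      obtain ⟨ζ, M, hM, hMe, hMs⟩ := ih (toppleAt G V η x) h'
      exact ⟨ζ, x :: M, ⟨hxV, hx3', hM⟩, hMe, hMs⟩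

lemma stabilize_spec (hG : IsBinaryTree G) (V : Finset S) (η : S → ℕ) :
    Stabilizes G V η (stabilize G V η) := by
  obtain ⟨ζ, hζ⟩ := exists_stabilizes hG V η
  rw [stabilize_eq hζ]
  exact hζ

lemma addGrain_comm (x y : S) (η : S → ℕ) :
    addGrain x (addGrain y η) = addGrain y (addGrain x η) := by
  by_cases hxy : x = y
  · subst hxy; rfl
  · funext z
    simp only [addGrain, Function.update_apply, if_neg hxy, if_neg (Ne.symm hxy)]
    by_cases hzx : z = x <;> by_cases hzy : z = y <;>
      simp [hzx, hzy, hxy, Ne.symm hxy] <;> omega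

lemma addOp_comm (hG : IsBinaryTree G) (V : Finset S) (x y : S) (η : S → ℕ) :
    addOp G V x (addOp G V y η) = addOp G V y (addOp G V x η) := by
  have key : ∀ a b : S, addOp G V a (addOp G V b η)
      = stabilize G V (addGrain a (addGrain b η)) := by
    intro a b
    have h1 : Stabilizes G V (addGrain b η) (stabilize G V (addGrain b η)) :=
      stabilize_spec hG V _
    have h2 : Stabilizes G V (addGrain a (stabilize G V (addGrain b η)))
        (stabilize G V (addGrain a (stabilize G V (addGrain b η)))) :=
      stabilize_spec hG V _
    have h3 := stabilizes_addGrain h1 h2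
    exact (stabilize_eq h3).symm
  rw [key, key, addGrain_comm]

lemma addInf_eqOn {η : S → ℕ} (hn : NormalCfg G η) (x : S) :
    ∃ W : Finset S, ∀ V : Finset S, W ⊆ V → addInf G x η = addOp G V x η := by
  have h := hn x
  refine ⟨h.choose, fun V hV => ?_⟩
  obtain ⟨hx, hstab⟩ := h.choose_spec
  unfold addInf
  rw [dif_pos h]
  calc addOp G h.choose x η
      = addOp G (h.choose ∪ V) x η :=
        (hstab h.choose (h.choose ∪ V) (subset_refl _) Finset.subset_union_left).symm
    _ = addOp G V x η := hstab V (h.choose ∪ V) hV Finset.subset_union_right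

end Aux

/-- The infinite-volume addition operators commute on normal configurations:
if `η`, `a_xη` and `a_yη` are all normal then `a_x(a_yη) = a_y(a_xη)`. -/
theorem addInf_comm (G : SimpleGraph S) [DecidableRel G.Adj]
    (hG : IsBinaryTree G) (η : S → ℕ) (hval : ∀ z : S, 1 ≤ η z ∧ η z ≤ 3)
    (x y : S) (h0 : NormalCfg G η)
    (h1 : NormalCfg G (addInf G x η)) (h2 : NormalCfg G (addInf G y η)) :
    addInf G x (addInf G y η) = addInf G y (addInf G x η) := by
  obtain ⟨Wy, hWy⟩ := addInf_eqOn h0 y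
  obtain ⟨Wx, hWx⟩ := addInf_eqOn h0 x
  obtain ⟨Wxy, hWxy⟩ := addInf_eqOn h2 x
  obtain ⟨Wyx, hWyx⟩ := addInf_eqOn h1 y
  set V : Finset S := Wy ∪ Wx ∪ Wxy ∪ Wyx with hV
  have sWy : Wy ⊆ V := by intro z hz; simp [hV]; tauto
  have sWx : Wx ⊆ V := by intro z hz; simp [hV]; tauto
  have sWxy : Wxy ⊆ V := by intro z hz; simp [hV]; tauto
  have sWyx : Wyx ⊆ V := by intro z hz; simp [hV]; tauto
  calc addInf G x (addInf G y η)
      = addOp G V x (addInf G y η) := hWxy V sWxy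
    _ = addOp G V x (addOp G V y η) := by rw [hWy V sWy]
    _ = addOp G V y (addOp G V x η) := addOp_comm hG V x y η
    _ = addOp G V y (addInf G x η) := by rw [hWx V sWx]
    _ = addInf G y (addInf G x η) := (hWyx V sWyx).symm
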